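/- Let V be a finite-dimensional vector space over a field K and let λ : V → K be a nonzero linear functional. Let P = {g ∈ GL(V) : λ ∘ g = λ} be the stabilizer of λ. For d with 1 ≤ d ≤ dim V, two d-dimensional subspaces W, W' of V lie in the same P-orbit (i.e., there exists g ∈ P with g(W) = W') if and only if (W ⊆ ker λ ↔ W' ⊆ ker λ). In particular, if 1 ≤ d ≤ dim V − 1, the P-action on the set of d-dimensional subspaces of V has exactly two orbits. -/

import Mathlib

open Module Submodule

section aux
variable {K V : Type*} [Field K] [AddCommGroup V] [Module K V]

lemma exists_basis_isCompl {ι ι' : Type*} (p q : Submodule K V) (h : IsCompl p q)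
    (b : Basis ι K p) (c : Basis ι' K q) :
    ∃ B : Basis (ι ⊕ ι') K V, (∀ i, B (Sum.inl i) = (b i : V)) ∧
      (∀ j, B (Sum.inr j) = (c j : V)) := by
  refine ⟨(b.prod c).map (Submodule.prodEquivOfIsCompl p q h), fun i => ?_, fun j => ?_⟩ <;>
    simp [Basis.map_apply, Submodule.coe_prodEquivOfIsCompl']

lemma ker_isCompl_span (lam : V →ₗ[K] K) (v₀ : V) (h0 : lam v₀ = 1) :
    IsCompl (LinearMap.ker lam) (K ∙ v₀) := by
  constructor
  · rw [disjoint_iff_inf_le]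
    rintro x ⟨hx1, hx2⟩
    obtain ⟨t, rfl⟩ := Submodule.mem_span_singleton.1 hx2
    have : lam (t • v₀) = t := by simp [h0]
    have hz : lam (t • v₀) = 0 := hx1
    have ht : t = 0 := by rw [hz] at this; exact this.symm
    simp [ht]
  · rw [codisjoint_iff_le_sup]
    intro v _
    have h1 : v - lam v • v₀ ∈ LinearMap.ker lam := by simp [h0]
    have h2 : lam v • v₀ ∈ K ∙ v₀ := Submodule.smul_mem _ _ (Submodule.mem_span_singleton_self _)
    have := Submodule.add_mem_sup h1 h2
    simpa using this

/-- span description of a submodule contained in another, through an adapted basis. -/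
lemma span_eq_of_le {H : Submodule K V} {U : Submodule K V} (hU : U ≤ H) {ι : Type*}
    (b : Basis ι K (Submodule.comap H.subtype U)) :
    U = Submodule.span K (Set.range fun i => ((b i : H) : V)) := by
  have h1 : (Submodule.comap H.subtype U : Submodule K H)
      = Submodule.span K (Set.range fun i => (b i : H)) := by
    conv_lhs => rw [← Submodule.map_subtype_top (Submodule.comap H.subtype U), ← b.span_eq]
    rw [Submodule.map_span]
    congr 1
    ext x
    simp [Set.range_comp]
  have h2 : U = Submodule.map H.subtype (Submodule.comap H.subtype U) := by
    rw [Submodule.map_comap_subtype, inf_eq_right.2 hU]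
  calc U = Submodule.map H.subtype (Submodule.comap H.subtype U) := h2
    _ = Submodule.map H.subtype (Submodule.span K (Set.range fun i => (b i : H))) :=
        congrArg _ h1
    _ = Submodule.span K (Set.range fun i => ((b i : H) : V)) := by
        rw [Submodule.map_span]
        congr 1
        ext x
        constructor
        · rintro ⟨y, ⟨i, rfl⟩, rfl⟩; exact ⟨i, rfl⟩
        · rintro ⟨i, rfl⟩; exact ⟨b i, ⟨i, rfl⟩, rfl⟩

/-- Key construction: extend compatible data to an automorphism preserving `lam`. -/
lemma key_construction [FiniteDimensional K V] (lam : V →ₗ[K] K)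
    (U U' : Submodule K V) (hU : U ≤ LinearMap.ker lam) (hU' : U' ≤ LinearMap.ker lam)
    (hrank : finrank K U = finrank K U') (v₀ v₀' : V) (h0 : lam v₀ = 1) (h0' : lam v₀' = 1) :
    ∃ g : V ≃ₗ[K] V, (∀ v, lam (g v) = lam v) ∧
      U.map (g : V →ₗ[K] V) = U' ∧ g v₀ = v₀' := by
  classical
  set H := LinearMap.ker lam with hH
  set U₀ : Submodule K H := Submodule.comap H.subtype U with hU₀
  set U₀' : Submodule K H := Submodule.comap H.subtype U' with hU₀'
  have eU : U₀ ≃ₗ[K] U := Submodule.comapSubtypeEquivOfLe hU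
  have eU' : U₀' ≃ₗ[K] U' := Submodule.comapSubtypeEquivOfLe hU'
  set r := finrank K U with hr
  have hrU₀ : finrank K U₀ = r := eU.finrank_eq
  have hrU₀' : finrank K U₀' = r := by rw [eU'.finrank_eq, ← hrank]
  obtain ⟨C₀, hC₀⟩ := Submodule.exists_isCompl U₀
  obtain ⟨C₀', hC₀'⟩ := Submodule.exists_isCompl U₀'
  have hsum : finrank K U₀ + finrank K C₀ = finrank K H :=
    Submodule.finrank_add_eq_of_isCompl hC₀
  have hsum' : finrank K U₀' + finrank K C₀' = finrank K H :=
    Submodule.finrank_add_eq_of_isCompl hC₀'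
  set s := finrank K H - r with hs
  have hrC₀ : finrank K C₀ = s := by omega
  have hrC₀' : finrank K C₀' = s := by omega
  -- bases
  set bU : Basis (Fin r) K U₀ := Module.finBasisOfFinrankEq K U₀ hrU₀ with hbU
  set bU' : Basis (Fin r) K U₀' := Module.finBasisOfFinrankEq K U₀' hrU₀' with hbU'
  set bC : Basis (Fin s) K C₀ := Module.finBasisOfFinrankEq K C₀ hrC₀ with hbC
  set bC' : Basis (Fin s) K C₀' := Module.finBasisOfFinrankEq K C₀' hrC₀' with hbC'
  obtain ⟨BH, hBH1, hBH2⟩ := exists_basis_isCompl U₀ C₀ hC₀ bU bC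
  obtain ⟨BH', hBH1', hBH2'⟩ := exists_basis_isCompl U₀' C₀' hC₀' bU' bC'
  have hcl : IsCompl H (K ∙ v₀) := ker_isCompl_span lam v₀ h0
  have hcl' : IsCompl H (K ∙ v₀') := ker_isCompl_span lam v₀' h0'
  have hv₀ne : v₀ ≠ 0 := by intro h; rw [h] at h0; simp at h0
  have hv₀ne' : v₀' ≠ 0 := by intro h; rw [h] at h0'; simp at h0'
  set bS : Basis Unit K (K ∙ v₀) :=
    (Basis.singleton Unit K).map (LinearEquiv.toSpanNonzeroSingleton K V v₀ hv₀ne) with hbS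
  set bS' : Basis Unit K (K ∙ v₀') :=
    (Basis.singleton Unit K).map (LinearEquiv.toSpanNonzeroSingleton K V v₀' hv₀ne') with hbS'
  have hbSval : ((bS () : K ∙ v₀) : V) = v₀ := by
    simp [hbS, Basis.map_apply]
  have hbSval' : ((bS' () : K ∙ v₀') : V) = v₀' := by
    simp [hbS', Basis.map_apply]
  obtain ⟨B, hB1, hB2⟩ := exists_basis_isCompl H (K ∙ v₀) hcl BH bS
  obtain ⟨B', hB1', hB2'⟩ := exists_basis_isCompl H (K ∙ v₀') hcl' BH' bS'
  set g : V ≃ₗ[K] V := B.equiv B' (Equiv.refl _) with hg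
  have hgB : ∀ i, g (B i) = B' i := fun i => by simp [hg, Basis.equiv_apply]
  -- lam values on basis vectors
  have hlamB : ∀ i, lam (B i) = lam (B' i) := by
    rintro (i | ⟨⟩)
    · rw [hB1, hB1']
      have h1 : lam ((BH i : H) : V) = 0 := (BH i : H).2
      have h2 : lam ((BH' i : H) : V) = 0 := (BH' i : H).2
      rw [h1, h2]
    · rw [hB2, hB2', hbSval, hbSval', h0, h0']
  have hlamg : ∀ v, lam (g v) = lam v := by
    have : lam ∘ₗ (g : V →ₗ[K] V) = lam := by
      apply B.ext
      intro i
      simp only [LinearMap.comp_apply, LinearEquiv.coe_coe, hgB]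
      exact (hlamB i).symm
    intro v
    exact LinearMap.congr_fun this v
  refine ⟨g, hlamg, ?_, ?_⟩
  · -- map of U
    have hUspan : U = Submodule.span K (Set.range fun i => ((bU i : H) : V)) :=
      span_eq_of_le hU bU
    have hUspan' : U' = Submodule.span K (Set.range fun i => ((bU' i : H) : V)) :=
      span_eq_of_le hU' bU'
    have hfun : (fun i : Fin r => g (((bU i : H) : V))) = fun i => ((bU' i : H) : V) := by
      funext i
      have e1 : ((bU i : H) : V) = B (Sum.inl (Sum.inl i)) := by rw [hB1, hBH1]
      rw [e1, hgB, hB1', hBH1']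
    calc U.map (g : V →ₗ[K] V)
        = span K ((g : V →ₗ[K] V) '' Set.range fun i => ((bU i : H) : V)) := by
          rw [hUspan, Submodule.map_span]
      _ = span K (Set.range fun i => g (((bU i : H) : V))) := by
          rw [← Set.range_comp]; rfl
      _ = span K (Set.range fun i => ((bU' i : H) : V)) := by rw [hfun]
      _ = U' := hUspan'.symm
  · -- g v₀ = v₀'
    have h1 : B (Sum.inr ()) = v₀ := by rw [hB2, hbSval]
    have h2 : B' (Sum.inr ()) = v₀' := by rw [hB2', hbSval']
    rw [← h1, hgB, h2]

lemma finrank_ker_lam [FiniteDimensional K V] (lam : V →ₗ[K] K) (hlam : lam ≠ 0) :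
    finrank K (LinearMap.ker lam) = finrank K V - 1 ∧ 1 ≤ finrank K V := by
  obtain ⟨v, hv⟩ : ∃ v, lam v ≠ 0 := by
    by_contra h
    push_neg at h
    exact hlam (LinearMap.ext fun v => by simp [h v])
  have hsurj : Function.Surjective lam := fun c =>
    ⟨(c * (lam v)⁻¹) • v, by rw [map_smul, smul_eq_mul]; field_simp⟩
  have hrange : LinearMap.range lam = ⊤ := LinearMap.range_eq_top.2 hsurj
  have h1 : finrank K (LinearMap.range lam) = 1 := by
    rw [hrange]; simpa using finrank_self K
  have := LinearMap.finrank_range_add_finrank_ker lam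
  rw [h1] at this
  constructor
  · omega
  · omega

lemma sup_ker_eq_top (lam : V →ₗ[K] K) (p : Submodule K V) (hker : LinearMap.ker lam ≤ p)
    (v₀ : V) (hv₀ : v₀ ∈ p) (h0 : lam v₀ = 1) : p = ⊤ := by
  rw [eq_top_iff]
  intro v _
  have h1 : v - lam v • v₀ ∈ p := hker (by simp [h0])
  have h2 : lam v • v₀ ∈ p := p.smul_mem _ hv₀
  have := p.add_mem h1 h2
  simpa using this

lemma exists_lam_one (lam : V →ₗ[K] K) (W : Submodule K V) (hW : ¬ W ≤ LinearMap.ker lam) :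
    ∃ w₀ ∈ W, lam w₀ = 1 := by
  obtain ⟨w, hwW, hw⟩ := SetLike.not_le_iff_exists.1 hW
  have hw' : lam w ≠ 0 := fun h => hw (LinearMap.mem_ker.2 h)
  exact ⟨(lam w)⁻¹ • w, W.smul_mem _ hwW, by rw [map_smul, smul_eq_mul]; field_simp⟩

lemma map_preserves_ker_side (lam : V →ₗ[K] K) (g : V ≃ₗ[K] V)
    (hg : ∀ v, lam (g v) = lam v) (W W' : Submodule K V)
    (hmap : W.map (g : V →ₗ[K] V) = W') :
    (W ≤ LinearMap.ker lam ↔ W' ≤ LinearMap.ker lam) := by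
  constructor
  · intro hWk x hx
    rw [← hmap] at hx
    obtain ⟨w, hw, rfl⟩ := hx
    have h1 : lam ((g : V →ₗ[K] V) w) = lam w := hg w
    exact LinearMap.mem_ker.2 (by rw [h1]; exact LinearMap.mem_ker.1 (hWk hw))
  · intro hW'k w hw
    have : g w ∈ W' := hmap ▸ ⟨w, hw, rfl⟩
    exact LinearMap.mem_ker.2 (by rw [← hg w]; exact LinearMap.mem_ker.1 (hW'k this))

lemma decompose_not_le (lam : V →ₗ[K] K) (W : Submodule K V) (w₀ : V) (hw₀W : w₀ ∈ W)
    (h0 : lam w₀ = 1) : W = (W ⊓ LinearMap.ker lam) ⊔ (K ∙ w₀) := by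
  apply le_antisymm
  · intro x hx
    have h1 : x - lam x • w₀ ∈ W ⊓ LinearMap.ker lam :=
      ⟨W.sub_mem hx (W.smul_mem _ hw₀W), by simp [h0]⟩
    have h2 : lam x • w₀ ∈ (K ∙ w₀) := Submodule.smul_mem _ _ (Submodule.mem_span_singleton_self _)
    have := Submodule.add_mem_sup h1 h2
    simpa using this
  · exact sup_le inf_le_left ((Submodule.span_singleton_le_iff_mem _ _).2 hw₀W)

lemma exists_submodule_finrank_eq [FiniteDimensional K V] (d : ℕ) (hd : d ≤ finrank K V) :
    ∃ p : Submodule K V, finrank K p = d := by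
  classical
  set b := Module.finBasis K V
  refine ⟨Submodule.span K (Set.range fun i : Fin d => b (Fin.castLE hd i)), ?_⟩
  rw [finrank_span_eq_card]
  · simp
  · exact b.linearIndependent.comp _ (Fin.castLE_injective hd)

end aux

open Module Submodule in
/-- The stabilizer of a nonzero linear functional (the "mirabolic" subgroup) has exactly two
orbits on `d`-dimensional subspaces: two subspaces are in the same orbit iff they are both
contained, or both not contained, in the kernel of the functional. -/
theorem mirabolic_two_orbits {K V : Type*} [Field K] [AddCommGroup V] [Module K V]
    [FiniteDimensional K V] (lam : V →ₗ[K] K) (hlam : lam ≠ 0) (d : ℕ) :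
    (∀ (_ : 1 ≤ d) (_ : d ≤ Module.finrank K V) (W W' : Submodule K V),
        Module.finrank K W = d → Module.finrank K W' = d →
        ((∃ g : V ≃ₗ[K] V, (∀ v, lam (g v) = lam v) ∧
            W.map (g : V →ₗ[K] V) = W') ↔
          (W ≤ LinearMap.ker lam ↔ W' ≤ LinearMap.ker lam))) ∧
    (1 ≤ d → d ≤ Module.finrank K V - 1 →
      ∃ W₁ W₂ : Submodule K V, Module.finrank K W₁ = d ∧ Module.finrank K W₂ = d ∧
        ¬ (∃ g : V ≃ₗ[K] V, (∀ v, lam (g v) = lam v) ∧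
            W₁.map (g : V →ₗ[K] V) = W₂) ∧
        ∀ W : Submodule K V, Module.finrank K W = d →
          (∃ g : V ≃ₗ[K] V, (∀ v, lam (g v) = lam v) ∧
              W₁.map (g : V →ₗ[K] V) = W) ∨
          (∃ g : V ≃ₗ[K] V, (∀ v, lam (g v) = lam v) ∧
              W₂.map (g : V →ₗ[K] V) = W)) := by
  obtain ⟨hker, hn1⟩ := finrank_ker_lam lam hlam
  obtain ⟨v, hv⟩ : ∃ v, lam v ≠ 0 := by
    by_contra h
    push_neg at h
    exact hlam (LinearMap.ext fun v => by simp [h v])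
  set v₀ : V := (lam v)⁻¹ • v with hv₀def
  have hv₀ : lam v₀ = 1 := by simp [hv₀def]; field_simp
  have hv₀ne : v₀ ≠ 0 := fun h => by rw [h] at hv₀; simp at hv₀
  have main : ∀ W W' : Submodule K V, 1 ≤ d → d ≤ finrank K V →
      finrank K W = d → finrank K W' = d →
      ((∃ g : V ≃ₗ[K] V, (∀ v, lam (g v) = lam v) ∧
          W.map (g : V →ₗ[K] V) = W') ↔
        (W ≤ LinearMap.ker lam ↔ W' ≤ LinearMap.ker lam)) := by
    intro W W' h1 h2 hW hW'
    constructor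
    · rintro ⟨g, hg, hmap⟩
      exact map_preserves_ker_side lam g hg W W' hmap
    · intro hiff
      by_cases hWk : W ≤ LinearMap.ker lam
      · have hW'k := hiff.1 hWk
        obtain ⟨g, hg, hmap, -⟩ :=
          key_construction lam W W' hWk hW'k (hW.trans hW'.symm) v₀ v₀ hv₀ hv₀
        exact ⟨g, hg, hmap⟩
      · have hW'k : ¬ W' ≤ LinearMap.ker lam := fun h => hWk (hiff.2 h)
        obtain ⟨w₀, hw₀W, h0⟩ := exists_lam_one lam W hWk
        obtain ⟨w₀', hw₀W', h0'⟩ := exists_lam_one lam W' hW'k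
        have hWsup : W ⊔ LinearMap.ker lam = ⊤ :=
          sup_ker_eq_top lam _ le_sup_right w₀ (Submodule.mem_sup_left hw₀W) h0
        have hWsup' : W' ⊔ LinearMap.ker lam = ⊤ :=
          sup_ker_eq_top lam _ le_sup_right w₀' (Submodule.mem_sup_left hw₀W') h0'
        have hfr : finrank K (W ⊓ LinearMap.ker lam : Submodule K V) = d - 1 := by
          have := Submodule.finrank_sup_add_finrank_inf_eq W (LinearMap.ker lam)
          rw [hWsup, hW, hker, finrank_top] at this
          omega
        have hfr' : finrank K (W' ⊓ LinearMap.ker lam : Submodule K V) = d - 1 := by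
          have := Submodule.finrank_sup_add_finrank_inf_eq W' (LinearMap.ker lam)
          rw [hWsup', hW', hker, finrank_top] at this
          omega
        obtain ⟨g, hg, hmapU, hgw₀⟩ :=
          key_construction lam (W ⊓ LinearMap.ker lam) (W' ⊓ LinearMap.ker lam)
            inf_le_right inf_le_right (hfr.trans hfr'.symm) w₀ w₀' h0 h0'
        refine ⟨g, hg, ?_⟩
        have hd1 : W = (W ⊓ LinearMap.ker lam) ⊔ (K ∙ w₀) := decompose_not_le lam W w₀ hw₀W h0
        have hd2 : W' = (W' ⊓ LinearMap.ker lam) ⊔ (K ∙ w₀') :=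
          decompose_not_le lam W' w₀' hw₀W' h0'
        rw [hd1, Submodule.map_sup, hmapU]
        conv_rhs => rw [hd2]
        congr 1
        rw [Submodule.map_span, Set.image_singleton]
        congr 1
        show ({(g : V →ₗ[K] V) w₀} : Set V) = {w₀'}
        simp only [LinearEquiv.coe_coe, hgw₀]
  constructor
  · intro h1 h2 W W' hW hW'
    exact main W W' h1 h2 hW hW'
  · intro h1 h2
    have hdn : d ≤ finrank K V := by omega
    obtain ⟨p, hp⟩ := exists_submodule_finrank_eq (V := LinearMap.ker lam) d
      (by rw [hker]; exact h2)
    set W₁ : Submodule K V := Submodule.map (LinearMap.ker lam).subtype p with hW₁def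
    have hW₁rank : finrank K W₁ = d := by
      rw [hW₁def, Submodule.finrank_map_subtype_eq]; exact hp
    have hW₁ker : W₁ ≤ LinearMap.ker lam := by
      rintro x ⟨y, hy, rfl⟩; exact y.2
    obtain ⟨q, hq⟩ := exists_submodule_finrank_eq (V := LinearMap.ker lam) (d - 1)
      (by rw [hker]; omega)
    set U : Submodule K V := Submodule.map (LinearMap.ker lam).subtype q with hUdef
    have hUrank : finrank K U = d - 1 := by
      rw [hUdef, Submodule.finrank_map_subtype_eq]; exact hq
    have hUker : U ≤ LinearMap.ker lam := by
      rintro x ⟨y, hy, rfl⟩; exact y.2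
    set W₂ : Submodule K V := U ⊔ (K ∙ v₀) with hW₂def
    have hv₀k : v₀ ∉ LinearMap.ker lam := by
      simp [LinearMap.mem_ker, hv₀]
    have hW₂ker : ¬ W₂ ≤ LinearMap.ker lam := fun h =>
      hv₀k (h (Submodule.mem_sup_right (Submodule.mem_span_singleton_self _)))
    have hinf : U ⊓ (K ∙ v₀) = ⊥ := by
      rw [eq_bot_iff]
      rintro x ⟨hx1, hx2⟩
      obtain ⟨t, rfl⟩ := Submodule.mem_span_singleton.1 hx2
      have h3 : lam (t • v₀) = 0 := hUker hx1
      have h4 : t = 0 := by simpa [hv₀] using h3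
      simp [h4]
    have hW₂rank : finrank K W₂ = d := by
      have := Submodule.finrank_sup_add_finrank_inf_eq U (K ∙ v₀)
      rw [hinf, finrank_bot, finrank_span_singleton hv₀ne, hUrank, ← hW₂def] at this
      omega
    refine ⟨W₁, W₂, hW₁rank, hW₂rank, ?_, ?_⟩
    · rintro ⟨g, hg, hmap⟩
      exact hW₂ker ((map_preserves_ker_side lam g hg W₁ W₂ hmap).1 hW₁ker)
    · intro W hWd
      by_cases hWk : W ≤ LinearMap.ker lam
      · exact Or.inl ((main W₁ W h1 hdn hW₁rank hWd).2 (iff_of_true hW₁ker hWk))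
      · exact Or.inr ((main W₂ W h1 hdn hW₂rank hWd).2 (iff_of_false hW₂ker hWk))
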